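/- Let (g, [·,·], α) be a multiplicative hom-Lie algebra. The graded direct sum Der(g) = ⊕_{k≥0} Der_{α^k}(g) of spaces of α^k-derivations, equipped with the commutator bracket [D, D′] = D∘D′ − D′∘D, is a Lie algebra. -/

import Mathlib

/-- A hom-Lie algebra: a real vector space with a skew-symmetric bilinear bracket
and a linear map `α` satisfying the hom-Jacobi identity. -/
structure HomLieAlgebra (g : Type*) [AddCommGroup g] [Module ℝ g] where
  bracket : g →ₗ[ℝ] g →ₗ[ℝ] g
  α : g →ₗ[ℝ] g
  skew : ∀ u v, bracket u v = - bracket v u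
  jacobi : ∀ u v w,
    bracket (α u) (bracket v w) + bracket (α v) (bracket w u)
      + bracket (α w) (bracket u v) = 0

/-- `D` is an `α^k`-derivation of a multiplicative hom-Lie algebra. -/
def IsAlphaDer {g : Type*} [AddCommGroup g] [Module ℝ g]
    (L : HomLieAlgebra g) (k : ℕ) (D : Module.End ℝ g) : Prop :=
  (∀ u, D (L.α u) = L.α (D u)) ∧
  (∀ u v, D (L.bracket u v)
    = L.bracket (D u) ((L.α ^ k) v) + L.bracket ((L.α ^ k) u) (D v))

attribute [local instance 100] LieRing.ofAssociativeRing

lemma der_pow_comm {g : Type*} [AddCommGroup g] [Module ℝ g]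
    {L : HomLieAlgebra g} {k : ℕ} {D : Module.End ℝ g}
    (hD : IsAlphaDer L k D) (n : ℕ) (u : g) :
    D ((L.α ^ n) u) = (L.α ^ n) (D u) := by
  have hc : Commute D (L.α) := LinearMap.ext hD.1
  have := hc.pow_right n
  exact LinearMap.congr_fun this u

lemma der_comm {g : Type*} [AddCommGroup g] [Module ℝ g]
    {L : HomLieAlgebra g} {k l : ℕ} {D D' : Module.End ℝ g}
    (hD : IsAlphaDer L k D) (hD' : IsAlphaDer L l D') :
    IsAlphaDer L (k + l) (D * D' - D' * D) := by
  obtain ⟨hDα, hDb⟩ := hD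
  obtain ⟨hD'α, hD'b⟩ := hD'
  have hDp := der_pow_comm ⟨hDα, hDb⟩
  have hD'p := der_pow_comm ⟨hD'α, hD'b⟩
  have hpow : ∀ w : g, (L.α ^ k) ((L.α ^ l) w) = (L.α ^ (k + l)) w := by
    intro w; rw [pow_add]; rfl
  have hpow' : ∀ w : g, (L.α ^ l) ((L.α ^ k) w) = (L.α ^ (k + l)) w := by
    intro w; rw [add_comm, pow_add]; rfl
  constructor
  · intro u
    simp only [LinearMap.sub_apply, Module.End.mul_apply, hDα, hD'α, map_sub]
  · intro u v
    simp only [LinearMap.sub_apply, Module.End.mul_apply]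
    rw [hD'b, map_add, hDb, hDb, hDb, map_add, hD'b, hD'b,
        hDp l, hDp l, hD'p k, hD'p k]
    simp only [hpow, hpow', map_sub, LinearMap.sub_apply, LinearMap.map_sub]
    abel

/-- The direct sum `Der(g) = ⊕_{k ≥ 0} Der_{α^k}(g)` (the subspace of `End(g)`
generated by all `α^k`-derivations, `k ≥ 0`), equipped with the commutator
bracket `[D, D'] = D∘D' − D'∘D`, is a Lie algebra: it is a Lie subalgebra of
`End(g)` with the commutator bracket. -/
theorem der_is_lie_algebra {g : Type*} [AddCommGroup g] [Module ℝ g]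
    (L : HomLieAlgebra g)
    (hmul : ∀ u v, L.α (L.bracket u v) = L.bracket (L.α u) (L.α v)) :
    ∃ S : LieSubalgebra ℝ (Module.End ℝ g),
      S.toSubmodule
        = Submodule.span ℝ {D : Module.End ℝ g | ∃ k : ℕ, IsAlphaDer L k D} := by
  set T : Set (Module.End ℝ g) := {D : Module.End ℝ g | ∃ k : ℕ, IsAlphaDer L k D}
  have key : ∀ x ∈ Submodule.span ℝ T, ∀ y ∈ Submodule.span ℝ T,
      ⁅x, y⁆ ∈ Submodule.span ℝ T := by
    intro x hx
    induction hx using Submodule.span_induction with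
    | mem a ha =>
      intro y hy
      induction hy using Submodule.span_induction with
      | mem b hb =>
        obtain ⟨k, hk⟩ := ha
        obtain ⟨l, hl⟩ := hb
        exact Submodule.subset_span ⟨k + l, by
          simpa [Ring.lie_def] using der_comm hk hl⟩
      | zero => simp
      | add b c _ _ hb hc => rw [lie_add]; exact Submodule.add_mem _ hb hc
      | smul r b _ hb => rw [lie_smul]; exact Submodule.smul_mem _ r hb
    | zero => intro y hy; simp
    | add a b _ _ ha hb =>
      intro y hy; rw [add_lie]; exact Submodule.add_mem _ (ha y hy) (hb y hy)
    | smul r a _ ha =>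
      intro y hy; rw [smul_lie]; exact Submodule.smul_mem _ r (ha y hy)
  exact ⟨{ toSubmodule := Submodule.span ℝ T,
           lie_mem' := fun {x y} hx hy => key x hx y hy }, rfl⟩
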